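/- Let I ⊆ ℚ[X] = ℚ[x₁,…,x_n] be a zero-dimensional ideal with associated primes M₁,…,M_s, and let σ₁,…,σ_s ∈ ℚ[X] be a system of separators, i.e. σᵢ ∉ Mᵢ and σᵢ ∈ M_j for all j ≠ i. Then for each i, the saturation I : σᵢ^∞ is an Mᵢ-primary ideal, and I = ⋂_{i=1}^{s} (I : σᵢ^∞) is a primary decomposition of I. -/

import Mathlib

open MvPolynomial

/-- **Remark (Shimoyama–Yokoyama).** Let `I ⊆ ℚ[x₁,…,xₙ]` be zero-dimensional with
associated primes `M₁,…,M_s` and separators `σ₁,…,σ_s` (`σᵢ ∉ Mᵢ`, `σᵢ ∈ M_j` for `j ≠ i`).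
Then each saturation `I : σᵢ^∞` (rendered as `⨆ k, (I : ⟨σᵢᵏ⟩)`) is an `Mᵢ`-primary ideal
and `I = ⋂ᵢ (I : σᵢ^∞)` is a primary decomposition. -/
theorem statement17 (n s : ℕ) (I : Ideal (MvPolynomial (Fin n) ℚ))
    (hfin : Module.Finite ℚ (MvPolynomial (Fin n) ℚ ⧸ I))
    (M : Fin s → Ideal (MvPolynomial (Fin n) ℚ))
    (hM : associatedPrimes (MvPolynomial (Fin n) ℚ) (MvPolynomial (Fin n) ℚ ⧸ I)
      = Set.range M)
    (σ : Fin s → MvPolynomial (Fin n) ℚ)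
    (hσ₁ : ∀ i, σ i ∉ M i)
    (hσ₂ : ∀ i j, j ≠ i → σ i ∈ M j) :
    (∀ i, (⨆ k : ℕ, Submodule.colon I (Ideal.span {σ i ^ k})).IsPrimary ∧
      (⨆ k : ℕ, Submodule.colon I (Ideal.span {σ i ^ k})).radical = M i) ∧
    I = ⨅ i : Fin s, ⨆ k : ℕ, Submodule.colon I (Ideal.span {σ i ^ k}) := by
  -- the M i are associated primes
  have hassoc : ∀ i, IsAssociatedPrime (M i) (MvPolynomial (Fin n) ℚ ⧸ I) := fun i => by
    have h : M i ∈ Set.range M := Set.mem_range_self i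
    rw [← hM] at h; exact h
  have hMprime : ∀ i, (M i).IsPrime := fun i => (hassoc i).isPrime
  -- I is contained in each M i
  have hIM : ∀ i, I ≤ M i := by
    intro i f hf
    obtain ⟨-, x, hx⟩ := hassoc i
    obtain ⟨y, rfl⟩ := Ideal.Quotient.mk_surjective x
    rw [hx]; refine Ideal.le_radical ?_; rw [Submodule.mem_colon_singleton, Submodule.mem_bot]
    show Ideal.Quotient.mk I (f * y) = 0
    rw [Ideal.Quotient.eq_zero_iff_mem]
    exact I.mul_mem_right y hf
  -- key: every nonzero element of the quotient is annihilated only inside some M j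
  have key : ∀ x : MvPolynomial (Fin n) ℚ ⧸ I, x ≠ 0 →
      ∃ j, ∀ r : MvPolynomial (Fin n) ℚ, r • x = 0 → r ∈ M j := by
    intro x hx
    obtain ⟨P, hP, hle⟩ :=
      exists_le_isAssociatedPrime_of_isNoetherianRing (MvPolynomial (Fin n) ℚ) x hx
    have hPr : P ∈ Set.range M := hM ▸ hP
    obtain ⟨j, rfl⟩ := hPr
    exact ⟨j, fun r hr => hle (Submodule.mem_colon_singleton.mpr (by rw [Submodule.mem_bot]; exact hr))⟩
  haveI : IsArtinianRing (MvPolynomial (Fin n) ℚ ⧸ I) := IsArtinianRing.of_finite ℚ _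
  -- elements of ⋂ M j are nilpotent mod I
  have nil : ∀ t : MvPolynomial (Fin n) ℚ, (∀ j, t ∈ M j) → ∃ N, t ^ N ∈ I := by
    intro t ht
    by_contra hcon
    push_neg at hcon
    have hmono : ∀ k l : ℕ, k ≤ l →
        (Ideal.span {(Ideal.Quotient.mk I t) ^ l} : Ideal (MvPolynomial (Fin n) ℚ ⧸ I))
          ≤ Ideal.span {(Ideal.Quotient.mk I t) ^ k} := by
      intro k l hkl
      rw [Ideal.span_singleton_le_span_singleton]
      exact ⟨(Ideal.Quotient.mk I t) ^ (l - k), by rw [← pow_add]; congr 1; omega⟩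
    obtain ⟨k, hk⟩ := IsArtinian.monotone_stabilizes
      (⟨fun k => (Ideal.span {(Ideal.Quotient.mk I t) ^ k} :
          Ideal (MvPolynomial (Fin n) ℚ ⧸ I)), fun k l hkl => hmono k l hkl⟩ :
        ℕ →o (Ideal (MvPolynomial (Fin n) ℚ ⧸ I))ᵒᵈ)
    have hkk : (Ideal.span {(Ideal.Quotient.mk I t) ^ k} :
        Ideal (MvPolynomial (Fin n) ℚ ⧸ I)) = Ideal.span {(Ideal.Quotient.mk I t) ^ (k + 1)} :=
      hk (k + 1) (Nat.le_succ k)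
    have hmem : (Ideal.Quotient.mk I t) ^ k ∈
        Ideal.span {(Ideal.Quotient.mk I t) ^ (k + 1)} := by
      rw [← hkk]; exact Ideal.subset_span rfl
    obtain ⟨c, hc⟩ := Ideal.mem_span_singleton'.mp hmem
    obtain ⟨u, rfl⟩ := Ideal.Quotient.mk_surjective c
    have hc' : Ideal.Quotient.mk I (t ^ k) = Ideal.Quotient.mk I (u * t ^ (k + 1)) := by
      rw [map_pow, map_mul, map_pow]
      exact hc.symm
    have hsub : t ^ k - u * t ^ (k + 1) ∈ I := Ideal.Quotient.eq.mp hc'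
    have hx : (Ideal.Quotient.mk I (t ^ k) : MvPolynomial (Fin n) ℚ ⧸ I) ≠ 0 := by
      rw [Ne, Ideal.Quotient.eq_zero_iff_mem]; exact hcon k
    obtain ⟨j, hj⟩ := key _ hx
    have hr : (1 - u * t) • (Ideal.Quotient.mk I (t ^ k) : MvPolynomial (Fin n) ℚ ⧸ I) = 0 := by
      show Ideal.Quotient.mk I ((1 - u * t) * t ^ k) = 0
      rw [Ideal.Quotient.eq_zero_iff_mem,
        show (1 - u * t) * t ^ k = t ^ k - u * t ^ (k + 1) by ring]
      exact hsub
    have h1 : (1 : MvPolynomial (Fin n) ℚ) - u * t ∈ M j := hj _ hr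
    have h2 : u * t ∈ M j := (M j).mul_mem_left u (ht j)
    have h3 : (1 : MvPolynomial (Fin n) ℚ) ∈ M j := by simpa using (M j).add_mem h1 h2
    exact (hMprime j).ne_top (Ideal.eq_top_iff_one _ |>.mpr h3)
  -- membership in the saturation
  have hmemQ : ∀ (i : Fin s) (f : MvPolynomial (Fin n) ℚ),
      f ∈ (⨆ k : ℕ, Submodule.colon I (Ideal.span {σ i ^ k})) ↔ ∃ k, f * σ i ^ k ∈ I := by
    intro i f
    have hmono : Monotone fun k : ℕ => Submodule.colon I (Ideal.span {σ i ^ k}) := by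
      intro k l hkl g hg
      rw [Ideal.mem_colon_span_singleton] at hg ⊢
      rw [show σ i ^ l = σ i ^ k * σ i ^ (l - k) by rw [← pow_add]; congr 1; omega,
        ← mul_assoc]
      exact I.mul_mem_right _ hg
    rw [Submodule.mem_iSup_of_directed _ hmono.directed_le]
    simp only [Ideal.mem_colon_span_singleton]
  -- I ≤ each saturation
  have hIQ : ∀ i, I ≤ ⨆ k : ℕ, Submodule.colon I (Ideal.span {σ i ^ k}) := by
    intro i f hf
    exact (hmemQ i f).mpr ⟨0, by simpa using hf⟩
  -- radical of the saturation is M i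
  have hrad : ∀ i, (⨆ k : ℕ, Submodule.colon I (Ideal.span {σ i ^ k})).radical = M i := by
    intro i
    apply le_antisymm
    · intro f hf
      obtain ⟨m, hm⟩ := hf
      obtain ⟨k, hk⟩ := (hmemQ i _).mp hm
      have hmk : f ^ m * σ i ^ k ∈ M i := hIM i hk
      rcases (hMprime i).mul_mem_iff_mem_or_mem.mp hmk with h | h
      · exact (hMprime i).mem_of_pow_mem m h
      · exact absurd ((hMprime i).mem_of_pow_mem k h) (hσ₁ i)
    · intro f hf
      have ht : ∀ j, σ i * f ∈ M j := by
        intro j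
        by_cases hji : j = i
        · subst hji; exact (M j).mul_mem_left _ hf
        · exact (M j).mul_mem_right _ (hσ₂ i j hji)
      obtain ⟨N, hN⟩ := nil _ ht
      refine ⟨N, (hmemQ i _).mpr ⟨N, ?_⟩⟩
      rw [show f ^ N * σ i ^ N = (σ i * f) ^ N by rw [mul_pow]; ring]
      exact hN
  -- M i is maximal
  have hmax : ∀ i, (M i).IsMaximal := by
    intro i
    haveI := hMprime i
    have hsurj : Function.Surjective (Ideal.Quotient.factor (hIM i)) := by
      intro x
      obtain ⟨y, rfl⟩ := Ideal.Quotient.mk_surjective x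
      exact ⟨Ideal.Quotient.mk I y, rfl⟩
    haveI : Module.Finite ℚ (MvPolynomial (Fin n) ℚ ⧸ M i) :=
      Module.Finite.of_surjective
        (Ideal.Quotient.factor (hIM i)).toRatAlgHom.toLinearMap hsurj
    haveI : IsArtinianRing (MvPolynomial (Fin n) ℚ ⧸ M i) := IsArtinianRing.of_finite ℚ _
    haveI : (⊥ : Ideal (MvPolynomial (Fin n) ℚ ⧸ M i)).IsPrime := Ideal.bot_prime
    have hbot : (⊥ : Ideal (MvPolynomial (Fin n) ℚ ⧸ M i)).IsMaximal :=
      IsArtinianRing.isMaximal_of_isPrime ⊥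
    apply Ideal.Quotient.maximal_of_isField
    by_contra hnf
    obtain ⟨J, hJ1, hJ2⟩ := Ring.not_isField_iff_exists_ideal_bot_lt_and_lt_top.mp hnf
    exact hJ1.ne (hbot.eq_of_le hJ2.ne bot_le)
  constructor
  · intro i
    refine ⟨?_, hrad i⟩
    exact Ideal.isPrimary_of_isMaximal_radical (by rw [hrad i]; exact hmax i)
  · apply le_antisymm
    · exact le_iInf hIQ
    · intro f hf
      by_contra hfI
      have hx : (Ideal.Quotient.mk I f : MvPolynomial (Fin n) ℚ ⧸ I) ≠ 0 := by
        rw [Ne, Ideal.Quotient.eq_zero_iff_mem]; exact hfI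
      obtain ⟨j, hj⟩ := key _ hx
      have hfj : f ∈ ⨆ k : ℕ, Submodule.colon I (Ideal.span {σ j ^ k}) :=
        (Submodule.mem_iInf _).mp hf j
      obtain ⟨k, hk⟩ := (hmemQ j f).mp hfj
      have hsm : (σ j ^ k) • (Ideal.Quotient.mk I f : MvPolynomial (Fin n) ℚ ⧸ I) = 0 := by
        show Ideal.Quotient.mk I (σ j ^ k * f) = 0
        rw [Ideal.Quotient.eq_zero_iff_mem, mul_comm]
        exact hk
      exact hσ₁ j ((hMprime j).mem_of_pow_mem k (hj _ hsm))
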